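/- arXiv:2407.00642 — 2 statements merged into one kernel-verified Lean document; each statement's English description precedes it below -/
import Mathlib

section
/- Let k be an integer with k > 1, let z ∈ ℤ, and let l, t ∈ ℤ[1/k]. Then l·z = t if and only if for every integer n the element (k^n − 1)² divides l·(k^{n·z} − 1) − t·(k^n − 1) in the ring ℤ[1/k]. -/
/-- The subring `ℤ[1/k] = {z·k^i : z, i ∈ ℤ}` of `ℚ`, as a set. -/
def zkSet (k : ℤ) : Set ℚ := {q | ∃ z i : ℤ, q = (z : ℚ) * (k : ℚ) ^ i}

lemma zk_mem_zero (k : ℤ) : (0:ℚ) ∈ zkSet k := ⟨0, 0, by simp⟩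

lemma zk_mem_intCast (k m : ℤ) : (m:ℚ) ∈ zkSet k := ⟨m, 0, by simp⟩

lemma zk_mem_zpow (k i : ℤ) : (k:ℚ)^i ∈ zkSet k := ⟨1, i, by simp⟩

lemma zk_mem_mul {k : ℤ} (hk0 : (k:ℚ) ≠ 0) {a b : ℚ} (ha : a ∈ zkSet k)
    (hb : b ∈ zkSet k) : a * b ∈ zkSet k := by
  obtain ⟨z1, i1, rfl⟩ := ha
  obtain ⟨z2, i2, rfl⟩ := hb
  exact ⟨z1 * z2, i1 + i2, by push_cast [zpow_add₀ hk0]; ring⟩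

lemma zk_mem_add {k : ℤ} (hk0 : (k:ℚ) ≠ 0) {a b : ℚ} (ha : a ∈ zkSet k)
    (hb : b ∈ zkSet k) : a + b ∈ zkSet k := by
  obtain ⟨z1, i1, rfl⟩ := ha
  obtain ⟨z2, i2, rfl⟩ := hb
  set m := min i1 i2 with hm
  refine ⟨z1 * k ^ (i1 - m).toNat + z2 * k ^ (i2 - m).toNat, m, ?_⟩
  have e1 : ((k:ℚ)) ^ ((i1 - m).toNat) * (k:ℚ) ^ m = (k:ℚ) ^ i1 := by
    rw [← zpow_natCast (k:ℚ) (i1 - m).toNat, ← zpow_add₀ hk0]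
    congr 1; omega
  have e2 : ((k:ℚ)) ^ ((i2 - m).toNat) * (k:ℚ) ^ m = (k:ℚ) ^ i2 := by
    rw [← zpow_natCast (k:ℚ) (i2 - m).toNat, ← zpow_add₀ hk0]
    congr 1; omega
  push_cast
  linear_combination -((z1:ℚ) * e1) - (z2:ℚ) * e2

lemma zk_mem_neg {k : ℤ} {a : ℚ} (ha : a ∈ zkSet k) : -a ∈ zkSet k := by
  obtain ⟨z1, i1, rfl⟩ := ha
  exact ⟨-z1, i1, by push_cast; ring⟩

lemma zk_mem_sub {k : ℤ} (hk0 : (k:ℚ) ≠ 0) {a b : ℚ} (ha : a ∈ zkSet k)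
    (hb : b ∈ zkSet k) : a - b ∈ zkSet k := by
  rw [sub_eq_add_neg]; exact zk_mem_add hk0 ha (zk_mem_neg hb)

/-- Key divisibility: `(k^n - 1)^2` divides `k^(n*z) - 1 - z*(k^n - 1)` in `ℤ[1/k]`. -/
lemma zk_key (k : ℤ) (hk0 : (k:ℚ) ≠ 0) (n : ℤ) (z : ℤ) :
    ∃ c ∈ zkSet k, (k:ℚ) ^ (n * z) - 1 - (z:ℚ) * ((k:ℚ) ^ n - 1)
      = ((k:ℚ) ^ n - 1) ^ 2 * c := by
  induction z using Int.induction_on with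
  | zero => exact ⟨0, zk_mem_zero k, by simp⟩
  | succ m ih =>
      obtain ⟨c, hc, hec⟩ := ih
      refine ⟨(k:ℚ) ^ n * c + (m:ℤ),
        zk_mem_add hk0 (zk_mem_mul hk0 (zk_mem_zpow k n) hc) (zk_mem_intCast k m), ?_⟩
      have e : (k:ℚ) ^ (n * ((m:ℤ) + 1)) = (k:ℚ) ^ (n * (m:ℤ)) * (k:ℚ) ^ n := by
        rw [← zpow_add₀ hk0]; congr 1; ring
      push_cast
      push_cast at hec
      linear_combination (k:ℚ) ^ n * hec + e
  | pred m ih =>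
      obtain ⟨c, hc, hec⟩ := ih
      refine ⟨(k:ℚ) ^ (-n) * (c + (((m:ℤ) + 1 : ℤ) : ℚ)),
        zk_mem_mul hk0 (zk_mem_zpow k (-n))
          (zk_mem_add hk0 hc (zk_mem_intCast k ((m:ℤ) + 1))), ?_⟩
      have e : (k:ℚ) ^ (n * (-(m:ℤ) - 1)) * (k:ℚ) ^ n = (k:ℚ) ^ (n * (-(m:ℤ))) := by
        rw [← zpow_add₀ hk0]; congr 1; ring
      have e2 : (k:ℚ) ^ (-n) * (k:ℚ) ^ n = 1 := by
        rw [← zpow_add₀ hk0]; simp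
      have hkn : (k:ℚ) ^ n ≠ 0 := zpow_ne_zero _ hk0
      refine mul_right_cancel₀ hkn ?_
      push_cast
      push_cast at hec
      linear_combination hec + e - (((k:ℚ) ^ n - 1) ^ 2 * (c + (m:ℚ) + 1)) * e2
  
/-- **Corollary 6.** For `k > 1`, `z ∈ ℤ` and `l, t ∈ ℤ[1/k]`: `l·z = t` iff for every
integer `n` the element `(k^n - 1)²` divides `l·(k^{n·z} - 1) - t·(k^n - 1)` in `ℤ[1/k]`. -/
theorem mul_int_eq_iff_congruences (k : ℤ) (hk : 1 < k) (z : ℤ) (l t : ℚ)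
    (hl : l ∈ zkSet k) (ht : t ∈ zkSet k) :
    l * (z : ℚ) = t ↔
      ∀ n : ℤ, ∃ c ∈ zkSet k,
        l * ((k : ℚ) ^ (n * z) - 1) - t * ((k : ℚ) ^ n - 1) = ((k : ℚ) ^ n - 1) ^ 2 * c := by
  have hk0 : (k:ℚ) ≠ 0 := by
    have : (0:ℚ) < (k:ℚ) := by exact_mod_cast lt_trans one_pos hk
    exact ne_of_gt this
  constructor
  · intro heq n
    obtain ⟨c₀, hc₀, hec⟩ := zk_key k hk0 n z
    exact ⟨l * c₀, zk_mem_mul hk0 hl hc₀,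
      by linear_combination l * hec + ((k:ℚ) ^ n - 1) * heq⟩
  · intro h
    -- d := l * z - t ∈ ℤ[1/k]
    have hd : l * (z:ℚ) - t ∈ zkSet k :=
      zk_mem_sub hk0 (zk_mem_mul hk0 hl (zk_mem_intCast k z)) ht
    obtain ⟨a, i, hai⟩ := hd
    rcases eq_or_ne a 0 with rfl | ha
    · have : l * (z:ℚ) - t = 0 := by rw [hai]; simp
      linarith [this]
    · exfalso
      set N : ℕ := a.natAbs + 1 with hN
      obtain ⟨c, hc, heq⟩ := h (N:ℤ)
      obtain ⟨c₀, hc₀, hec⟩ := zk_key k hk0 (N:ℤ) z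
      have hK2 : (2:ℤ) ≤ k ^ N := by
        calc (2:ℤ) = 2 ^ 1 := by norm_num
        _ ≤ 2 ^ N := by
            apply pow_le_pow_right₀ (by norm_num); omega
        _ ≤ k ^ N := pow_le_pow_left₀ (by norm_num) (by omega) N
      have hKne : (k:ℚ) ^ ((N:ℤ)) - 1 ≠ 0 := by
        have : ((k ^ N : ℤ) : ℚ) ≠ 1 := by
          exact_mod_cast (by omega : (k:ℤ) ^ N ≠ 1)
        rw [zpow_natCast]
        push_cast at this
        exact sub_ne_zero_of_ne this
      have h2 : (l * (z:ℚ) - t) * ((k:ℚ) ^ ((N:ℤ)) - 1)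
          = (((k:ℚ) ^ ((N:ℤ)) - 1) * (c - l * c₀)) * ((k:ℚ) ^ ((N:ℤ)) - 1) := by
        linear_combination heq - l * hec
      have hdeq : l * (z:ℚ) - t = ((k:ℚ) ^ ((N:ℤ)) - 1) * (c - l * c₀) :=
        mul_right_cancel₀ hKne h2
      obtain ⟨b, j, hbj⟩ := zk_mem_sub hk0 hc (zk_mem_mul hk0 hl hc₀)
      -- Now: a * k^i = (k^N - 1) * b * k^j in ℚ
      have hq : (a:ℚ) * (k:ℚ) ^ i = ((k:ℚ) ^ ((N:ℤ)) - 1) * ((b:ℚ) * (k:ℚ) ^ j) := by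
        rw [← hai, ← hbj]; exact hdeq
      set M : ℕ := i.natAbs + j.natAbs with hM
      have hM' : (M:ℤ) = (i.natAbs : ℤ) + (j.natAbs : ℤ) := by rw [hM]; push_cast; ring
      have hq2 : (a:ℚ) * (k:ℚ) ^ ((i + M).toNat) =
          ((k:ℚ) ^ N - 1) * ((b:ℚ) * (k:ℚ) ^ ((j + M).toNat)) := by
        have ei : ((k:ℚ)) ^ ((i + M).toNat) = (k:ℚ) ^ i * (k:ℚ) ^ (M:ℤ) := by
          rw [← zpow_natCast (k:ℚ) (i + M).toNat, ← zpow_add₀ hk0]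
          congr 1; omega
        have ej : ((k:ℚ)) ^ ((j + M).toNat) = (k:ℚ) ^ j * (k:ℚ) ^ (M:ℤ) := by
          rw [← zpow_natCast (k:ℚ) (j + M).toNat, ← zpow_add₀ hk0]
          congr 1; omega
        rw [ei, ej, ← zpow_natCast (k:ℚ) N]
        linear_combination (k:ℚ) ^ (M:ℤ) * hq
      have hz : a * k ^ ((i + M).toNat) = (k ^ N - 1) * (b * k ^ ((j + M).toNat)) := by
        exact_mod_cast hq2
      have hdvd : (k ^ N - 1 : ℤ) ∣ a * k ^ ((i + M).toNat) := ⟨_, hz⟩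
      have hcop : IsCoprime (k ^ N - 1 : ℤ) (k ^ ((i + M).toNat)) := by
        apply IsCoprime.pow_right
        refine ⟨-1, k ^ (N - 1), ?_⟩
        have : k ^ (N - 1) * k = k ^ N := by
          rw [← pow_succ, Nat.sub_add_cancel (by omega)]
        linarith [this]
      have hdvda : (k ^ N - 1 : ℤ) ∣ a := hcop.dvd_of_dvd_mul_right hdvd
      have hle : (k ^ N - 1 : ℤ) ≤ |a| :=
        Int.le_of_dvd (abs_pos.mpr ha) ((dvd_abs _ _).mpr hdvda)
      have hbig : (a.natAbs : ℤ) < k ^ N - 1 := by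
        have h2n : (N:ℤ) < 2 ^ N := by exact_mod_cast (Nat.lt_two_pow_self : N < 2 ^ N)
        have : (2:ℤ) ^ N ≤ k ^ N := pow_le_pow_left₀ (by norm_num) (by omega) N
        omega
      rw [Int.abs_eq_natAbs] at hle
      omega
end

section
/- Let k be an integer with k > 1, let b₁ ∈ Ab, and let m, n be integers with n ≠ 0. Then n divides m in ℤ if and only if for every c ∈ A there exists u ∈ A such that [b₁^{m}, c] = [b₁^{n}, u] in G = ℤ[1/k] ⋊ ℤ, where [x, y] = x⁻¹y⁻¹xy. -/
theorem zkSet_neg {k : ℤ} {q : ℚ} (hq : q ∈ zkSet k) : -q ∈ zkSet k := by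
  obtain ⟨z, i, rfl⟩ := hq
  exact ⟨-z, i, by push_cast; ring⟩

theorem zkSet_mul_zpow {k : ℤ} (hk : (k : ℚ) ≠ 0) {q : ℚ} (hq : q ∈ zkSet k) (j : ℤ) :
    q * (k : ℚ) ^ j ∈ zkSet k := by
  obtain ⟨z, i, rfl⟩ := hq
  exact ⟨z, i + j, by rw [zpow_add₀ hk]; ring⟩

theorem zkSet_add {k : ℤ} (hk : (k : ℚ) ≠ 0) {p q : ℚ}
    (hp : p ∈ zkSet k) (hq : q ∈ zkSet k) : p + q ∈ zkSet k := by
  obtain ⟨z₁, i₁, rfl⟩ := hp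
  obtain ⟨z₂, i₂, rfl⟩ := hq
  rcases le_total i₁ i₂ with h | h
  · refine ⟨z₁ + z₂ * k ^ (i₂ - i₁).toNat, i₁, ?_⟩
    have hpow : ((k : ℚ)) ^ ((i₂ - i₁).toNat) = (k : ℚ) ^ (i₂ - i₁) := by
      rw [← zpow_natCast, Int.toNat_of_nonneg (by omega)]
    push_cast
    rw [hpow]
    have e : (k : ℚ) ^ (i₂ - i₁) * (k : ℚ) ^ i₁ = (k : ℚ) ^ i₂ := by
      rw [← zpow_add₀ hk, show i₂ - i₁ + i₁ = i₂ from by omega]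
    linear_combination (-(z₂ : ℚ)) * e
  · refine ⟨z₂ + z₁ * k ^ (i₁ - i₂).toNat, i₂, ?_⟩
    have hpow : ((k : ℚ)) ^ ((i₁ - i₂).toNat) = (k : ℚ) ^ (i₁ - i₂) := by
      rw [← zpow_natCast, Int.toNat_of_nonneg (by omega)]
    push_cast
    rw [hpow]
    have e : (k : ℚ) ^ (i₁ - i₂) * (k : ℚ) ^ i₂ = (k : ℚ) ^ i₁ := by
      rw [← zpow_add₀ hk, show i₁ - i₂ + i₂ = i₁ from by omega]
    linear_combination (-(z₁ : ℚ)) * e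

/-- The underlying set of the semidirect product `G = ℤ[1/k] ⋊ ℤ` (modelled inside
`ℚ × ℤ`): pairs `(y, m)` with multiplication `(y₁,m₁)(y₂,m₂) = (y₁ + y₂·k^{-m₁}, m₁+m₂)`. -/
@[ext]
structure BSQ (k : ℤ) : Type where
  y : ℚ
  m : ℤ

namespace BSQ

variable {k : ℤ}

instance : Mul (BSQ k) := ⟨fun g h => ⟨g.y + h.y * (k : ℚ) ^ (-g.m), g.m + h.m⟩⟩
instance : One (BSQ k) := ⟨⟨0, 0⟩⟩
instance : Inv (BSQ k) := ⟨fun g => ⟨-g.y * (k : ℚ) ^ g.m, -g.m⟩⟩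

@[simp] theorem mul_y (g h : BSQ k) : (g * h).y = g.y + h.y * (k : ℚ) ^ (-g.m) := rfl
@[simp] theorem mul_m (g h : BSQ k) : (g * h).m = g.m + h.m := rfl
@[simp] theorem one_y : (1 : BSQ k).y = 0 := rfl
@[simp] theorem one_m : (1 : BSQ k).m = 0 := rfl
@[simp] theorem inv_y (g : BSQ k) : g⁻¹.y = -g.y * (k : ℚ) ^ g.m := rfl
@[simp] theorem inv_m (g : BSQ k) : g⁻¹.m = -g.m := rfl

theorem kq_ne_zero [Fact (1 < k)] : (k : ℚ) ≠ 0 := by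
  have h : (1 : ℤ) < k := Fact.out
  have h' : (k : ℤ) ≠ 0 := by omega
  exact_mod_cast h'

private theorem mul_assoc' [Fact (1 < k)] (a b c : BSQ k) : a * b * c = a * (b * c) := by
  ext
  · simp only [mul_y, mul_m, neg_add, zpow_add₀ (kq_ne_zero (k := k))]
    ring
  · simp only [mul_m]
    ring

private theorem one_mul' [Fact (1 < k)] (a : BSQ k) : 1 * a = a := by
  ext <;> simp

private theorem mul_one' [Fact (1 < k)] (a : BSQ k) : a * 1 = a := by
  ext <;> simp

private theorem inv_mul_cancel' [Fact (1 < k)] (a : BSQ k) : a⁻¹ * a = 1 := by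
  ext
  · simp only [mul_y, inv_y, inv_m, one_y, neg_neg]
    ring
  · simp only [mul_m, inv_m, one_m]
    ring

/-- The group structure on `ℤ[1/k] ⋊ ℤ` (here on the ambient `ℚ ⋊ ℤ`). -/
instance [Fact (1 < k)] : Group (BSQ k) where
  mul := (· * ·)
  one := 1
  inv := Inv.inv
  mul_assoc := mul_assoc'
  one_mul := one_mul'
  mul_one := mul_one'
  inv_mul_cancel := inv_mul_cancel'

end BSQ

/-- The group `G = ℤ[1/k] ⋊ ℤ`, as the subgroup of `ℚ ⋊ ℤ` of pairs whose first
coordinate lies in `ℤ[1/k]`. -/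
def bsSubgroup (k : ℤ) [Fact (1 < k)] : Subgroup (BSQ k) where
  carrier := {g | g.y ∈ zkSet k}
  one_mem' := ⟨0, 0, by norm_num⟩
  mul_mem' := by
    intro a b ha hb
    exact zkSet_add BSQ.kq_ne_zero ha (zkSet_mul_zpow BSQ.kq_ne_zero hb _)
  inv_mem' := by
    intro a ha
    exact zkSet_mul_zpow BSQ.kq_ne_zero (zkSet_neg ha) _

theorem mem_bsSubgroup {k : ℤ} [Fact (1 < k)] {g : BSQ k} (h : g.y ∈ zkSet k) :
    g ∈ bsSubgroup k := h

/-- The set `A = {(y,0) : y ∈ ℤ[1/k]}`. -/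
def aSet (k : ℤ) : Set (BSQ k) := {g | g.y ∈ zkSet k ∧ g.m = 0}

/-- The set `Ab = {(y,1) : y ∈ ℤ[1/k]}`. -/
def abSet (k : ℤ) : Set (BSQ k) := {g | g.y ∈ zkSet k ∧ g.m = 1}

/-- The commutator `[x, y] = x⁻¹ y⁻¹ x y` (the paper's convention). -/
def gcomm {k : ℤ} [Fact (1 < k)] (x y : BSQ k) : BSQ k := x⁻¹ * y⁻¹ * x * y


section AuxLemmas

variable {k : ℤ} [Fact (1 < k)]

theorem zkSet_mul {p q : ℚ} (hp : p ∈ zkSet k) (hq : q ∈ zkSet k) : p * q ∈ zkSet k := by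
  obtain ⟨z₁, i₁, rfl⟩ := hp; obtain ⟨z₂, i₂, rfl⟩ := hq
  exact ⟨z₁ * z₂, i₁ + i₂, by push_cast; rw [zpow_add₀ BSQ.kq_ne_zero]; ring⟩

omit [Fact (1 < k)] in
theorem zkSet_zpow (j : ℤ) : (k:ℚ) ^ j ∈ zkSet k := ⟨1, j, by norm_num⟩

theorem BSQ.pow_m (g : BSQ k) (N : ℕ) : (g ^ N).m = N * g.m := by
  induction N with
  | zero => simp [pow_zero]
  | succ t ih => rw [pow_succ, BSQ.mul_m, ih]; push_cast; ring

theorem BSQ.zpow_m (g : BSQ k) (j : ℤ) : (g ^ j).m = j * g.m := by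
  rcases j with N | N
  · rw [Int.ofNat_eq_coe, zpow_natCast, BSQ.pow_m]
  · rw [zpow_negSucc, BSQ.inv_m, BSQ.pow_m, Int.negSucc_eq]; push_cast; ring

theorem gcomm_eq (g c : BSQ k) (hc : c.m = 0) :
    gcomm g c = ⟨c.y * (1 - (k:ℚ) ^ g.m), 0⟩ := by
  have hk : (k:ℚ) ≠ 0 := BSQ.kq_ne_zero
  ext
  · simp only [gcomm, BSQ.mul_y, BSQ.mul_m, BSQ.inv_y, BSQ.inv_m, hc]
    simp only [neg_zero, add_zero, neg_neg, zpow_zero, neg_add_cancel, mul_one]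
    ring
  · simp only [gcomm, BSQ.mul_m, BSQ.inv_m, hc]
    ring

/-- Geometric series: `1 - k^n` divides `1 - k^{nt}` within `ℤ[1/k]`. -/
theorem geomC (n : ℤ) : ∀ t : ℤ, ∃ S ∈ zkSet k, 1 - (k:ℚ) ^ (n * t) = (1 - (k:ℚ) ^ n) * S := by
  have hk : (k:ℚ) ≠ 0 := BSQ.kq_ne_zero
  intro t
  induction t using Int.induction_on with
  | zero => exact ⟨0, ⟨0, 0, by norm_num⟩, by norm_num⟩
  | succ i ih =>
    obtain ⟨S, hS, he⟩ := ih
    refine ⟨S + (k:ℚ) ^ (n * i), zkSet_add hk hS (zkSet_zpow _), ?_⟩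
    have f : (k:ℚ) ^ (n * (i + 1)) = (k:ℚ) ^ (n * i) * (k:ℚ) ^ n := by
      rw [← zpow_add₀ hk]; congr 1; ring
    linear_combination he - f
  | pred i ih =>
    obtain ⟨S, hS, he⟩ := ih
    refine ⟨S - (k:ℚ) ^ (n * (-i - 1)), by
      rw [sub_eq_add_neg]
      exact zkSet_add hk hS (zkSet_neg (zkSet_zpow _)), ?_⟩
    have f : (k:ℚ) ^ (n * (-(i:ℤ))) = (k:ℚ) ^ (n * (-i - 1)) * (k:ℚ) ^ n := by
      rw [← zpow_add₀ hk]; congr 1; ring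
    linear_combination he + f

/-- `1 - k^m` equals a unit of `ℤ[1/k]` times `1 - k^{|m|}`. -/
theorem eps_eq (m : ℤ) : ∃ s j : ℤ, (s:ℚ) * (s:ℚ) = 1 ∧
    (1 - (k:ℚ) ^ m) = (s:ℚ) * (k:ℚ) ^ j * (1 - (k:ℚ) ^ (m.natAbs)) := by
  have hk : (k:ℚ) ≠ 0 := BSQ.kq_ne_zero
  rcases le_or_gt 0 m with h | h
  · refine ⟨1, 0, by norm_num, ?_⟩
    rw [← zpow_natCast (k:ℚ) m.natAbs, Int.natAbs_of_nonneg h]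
    simp
  · refine ⟨-1, m, by norm_num, ?_⟩
    have ha : ((m.natAbs : ℤ)) = -m := by omega
    have h1 : (k:ℚ) ^ (m.natAbs : ℕ) = (k:ℚ) ^ (-m) := by
      rw [← zpow_natCast (k:ℚ) m.natAbs, ha]
    have h2 : (k:ℚ) ^ m * (k:ℚ) ^ (-m) = 1 := by
      rw [← zpow_add₀ hk]; simp
    rw [h1]
    push_cast
    linear_combination -h2

theorem key_cop {K : ℤ} (hb' : 0 < K) {b : ℕ} (hb : 0 < b) (j : ℕ) :
    IsCoprime (K ^ b - 1) (K ^ j) := by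
  apply IsCoprime.pow_right
  refine ⟨-1, K ^ (b - 1), ?_⟩
  have h : K ^ (b - 1) * K = K ^ b := by
    rw [← pow_succ, Nat.sub_add_cancel hb]
  linear_combination h

theorem key_nat {K : ℤ} (hK : 1 < K) {b : ℕ} (hb : 0 < b) :
    ∀ a : ℕ, (K ^ b - 1 ∣ K ^ a - 1) → b ∣ a := by
  intro a
  induction a using Nat.strong_induction_on with
  | _ a ih =>
    intro hdvd
    rcases lt_or_ge a b with hab | hab
    · have h0 : (1:ℤ) ≤ K ^ a := one_le_pow₀ (by omega)
      have h1 : K ^ a - 1 = 0 := by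
        by_contra h0'
        have h2 : 0 < K ^ a - 1 := by omega
        have h3 := Int.le_of_dvd h2 hdvd
        have h4 : K ^ a < K ^ b := pow_lt_pow_right₀ hK hab
        omega
      have h5 : a = 0 := by
        by_contra h0'
        have := one_lt_pow₀ hK h0'
        omega
      simp [h5]
    · have hpow : K ^ (a - b) * K ^ b = K ^ a := by
        rw [← pow_add, Nat.sub_add_cancel hab]
      have hsub : K ^ b - 1 ∣ K ^ (a - b) - 1 := by
        have hd2 : K ^ b - 1 ∣ (K ^ a - 1) - K ^ (a - b) * (K ^ b - 1) :=
          dvd_sub hdvd (dvd_mul_left _ _)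
        have he : (K ^ a - 1) - K ^ (a - b) * (K ^ b - 1) = K ^ (a - b) - 1 := by
          linear_combination -hpow
        rwa [he] at hd2
      obtain ⟨c, hc⟩ := ih (a - b) (by omega) hsub
      exact ⟨c + 1, by rw [Nat.mul_succ, ← hc]; omega⟩

/-- Core of the backward direction, with natural exponents. -/
theorem keyB {a b : ℕ} (hb : 0 < b) (w v z : ℤ)
    (h : (k:ℚ) ^ w * (1 - (k:ℚ) ^ a) = (z:ℚ) * (k:ℚ) ^ v * (1 - (k:ℚ) ^ b)) : b ∣ a := by
  have hK : (1:ℤ) < k := Fact.out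
  have hk : (k:ℚ) ≠ 0 := BSQ.kq_ne_zero
  set E : ℕ := w.natAbs + v.natAbs with hE
  set q : ℕ := (v + E - w).toNat with hq
  have hq' : (q : ℤ) = v + E - w := by
    rw [hq]; rw [Int.toNat_of_nonneg (by omega)]
  have f1 : (k:ℚ) ^ (E:ℕ) = (k:ℚ) ^ (w:ℤ) * (k:ℚ) ^ ((E:ℤ) - w) := by
    rw [← zpow_add₀ hk, ← zpow_natCast (k:ℚ) E]; congr 1; ring
  have f2 : (k:ℚ) ^ (q:ℕ) = (k:ℚ) ^ (v:ℤ) * (k:ℚ) ^ ((E:ℤ) - w) := by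
    rw [← zpow_add₀ hk, ← zpow_natCast (k:ℚ) q, hq']; congr 1; ring
  have hQ : (k:ℚ) ^ (E:ℕ) * (1 - (k:ℚ) ^ a) = (z:ℚ) * (k:ℚ) ^ (q:ℕ) * (1 - (k:ℚ) ^ b) := by
    linear_combination ((k:ℚ) ^ ((E:ℤ) - w)) * h + (1 - (k:ℚ) ^ a) * f1
      - (z:ℚ) * (1 - (k:ℚ) ^ b) * f2
  have hZ : (k:ℤ) ^ E * (1 - (k:ℤ) ^ a) = z * (k:ℤ) ^ q * (1 - (k:ℤ) ^ b) := by
    exact_mod_cast hQ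
  have hdvd : (k:ℤ) ^ b - 1 ∣ ((k:ℤ) ^ a - 1) * (k:ℤ) ^ E :=
    ⟨z * (k:ℤ) ^ q, by linear_combination -hZ⟩
  have hdvd2 : (k:ℤ) ^ b - 1 ∣ (k:ℤ) ^ a - 1 :=
    (key_cop (by omega) hb E).dvd_of_dvd_mul_right hdvd
  exact key_nat hK hb a hdvd2

/-- Backward direction, integer exponents. -/
theorem zdvd_of_rat {m n : ℤ} (hn : n ≠ 0) (z i : ℤ)
    (h : 1 - (k:ℚ) ^ m = (z:ℚ) * (k:ℚ) ^ i * (1 - (k:ℚ) ^ n)) : n ∣ m := by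
  have hk : (k:ℚ) ≠ 0 := BSQ.kq_ne_zero
  obtain ⟨s₁, j₁, hs₁, he₁⟩ := eps_eq (k := k) m
  obtain ⟨s₂, j₂, hs₂, he₂⟩ := eps_eq (k := k) n
  have hb : 0 < n.natAbs := by omega
  have g : (k:ℚ) ^ (i + j₂) = (k:ℚ) ^ i * (k:ℚ) ^ j₂ := zpow_add₀ hk _ _
  have h' : (k:ℚ) ^ j₁ * (1 - (k:ℚ) ^ (m.natAbs)) =
      ((s₁ * s₂ * z : ℤ):ℚ) * (k:ℚ) ^ (i + j₂) * (1 - (k:ℚ) ^ (n.natAbs)) := by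
    push_cast
    linear_combination (-(s₁:ℚ)) * he₁ + (s₁:ℚ) * h + (s₁:ℚ) * (z:ℚ) * (k:ℚ) ^ i * he₂
      - ((k:ℚ) ^ j₁ * (1 - (k:ℚ) ^ (m.natAbs))) * hs₁
      - ((s₁:ℚ) * (s₂:ℚ) * (z:ℚ) * (1 - (k:ℚ) ^ (n.natAbs))) * g
  have := keyB hb j₁ (i + j₂) (s₁ * s₂ * z) h'
  exact Int.natAbs_dvd_natAbs.mp this

end AuxLemmas

/-- **Definability of divisibility.** For `b₁ ∈ Ab` and integers `m, n` with `n ≠ 0`: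
`n ∣ m` in `ℤ` iff for every `c ∈ A` there exists `u ∈ A` with
`[b₁^m, c] = [b₁^n, u]` in `G = ℤ[1/k] ⋊ ℤ`. -/
theorem dvd_iff_commutator_condition (k : ℤ) [Fact (1 < k)] (b₁ : BSQ k)
    (hb : b₁ ∈ abSet k) (m n : ℤ) (hn : n ≠ 0) :
    n ∣ m ↔ ∀ c ∈ aSet k, ∃ u ∈ aSet k, gcomm (b₁ ^ m) c = gcomm (b₁ ^ n) u := by
  have hk : (k:ℚ) ≠ 0 := BSQ.kq_ne_zero
  have hbm : b₁.m = 1 := hb.2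
  have hmm : (b₁ ^ m).m = m := by rw [BSQ.zpow_m, hbm, mul_one]
  have hnm : (b₁ ^ n).m = n := by rw [BSQ.zpow_m, hbm, mul_one]
  constructor
  · rintro ⟨t, rfl⟩ c hc
    obtain ⟨S, hS, hSe⟩ := geomC (k := k) n t
    refine ⟨⟨c.y * S, 0⟩, ⟨zkSet_mul hc.1 hS, rfl⟩, ?_⟩
    rw [gcomm_eq _ _ hc.2, gcomm_eq _ _ rfl]
    ext
    · show c.y * (1 - (k:ℚ) ^ (b₁ ^ (n * t)).m) = c.y * S * (1 - (k:ℚ) ^ (b₁ ^ n).m)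
      rw [hmm, hnm]
      linear_combination c.y * hSe
    · rfl
  · intro h
    obtain ⟨u, hu, he⟩ := h ⟨1, 0⟩ ⟨⟨1, 0, by norm_num⟩, rfl⟩
    rw [gcomm_eq _ _ rfl, gcomm_eq _ _ hu.2] at he
    have hy : (1:ℚ) * (1 - (k:ℚ) ^ (b₁ ^ m).m) = u.y * (1 - (k:ℚ) ^ (b₁ ^ n).m) :=
      congrArg BSQ.y he
    rw [hmm, hnm, one_mul] at hy
    obtain ⟨z, i, hz⟩ := hu.1
    rw [hz] at hy
    exact zdvd_of_rat hn z i hy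
end
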